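/- For every permutation π ∈ S_n and every integer m with 0 ≤ m ≤ n−1, F(π, m) = F(π, n−m−1). -/

import Mathlib

/-- The maximum entry of a list of naturals (0 for the empty list). -/
def listMax : List ℕ → ℕ
  | [] => 0
  | a :: t => max a (listMax t)

theorem listMax_mem : ∀ (l : List ℕ), l ≠ [] → listMax l ∈ l
  | [a], _ => by simp [listMax]
  | a :: b :: t, _ => by
    by_cases h : listMax (b :: t) ≤ a
    · have hm : listMax (a :: b :: t) = a := max_eq_left h
      rw [hm]; exact List.mem_cons_self
    · have hm : listMax (a :: b :: t) = listMax (b :: t) := max_eq_right (le_of_not_ge h)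
      rw [hm]
      exact List.mem_cons_of_mem _ (listMax_mem (b :: t) (by simp))

theorem length_takeWhile_lt {p : ℕ → Bool} {l : List ℕ} {x : ℕ}
    (hx : x ∈ l) (hpx : p x = false) : (l.takeWhile p).length < l.length := by
  induction l with
  | nil => cases hx
  | cons a t ih =>
    by_cases hpa : p a
    · rw [List.takeWhile_cons_of_pos hpa]
      have hxt : x ∈ t := by
        rcases List.mem_cons.mp hx with rfl | h
        · rw [hpa] at hpx; cases hpx
        · exact h
      simpa using Nat.succ_lt_succ (ih hxt)
    · rw [List.takeWhile_cons_of_neg (by simpa using hpa)]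
      simp

theorem length_dropWhile_le (p : ℕ → Bool) (l : List ℕ) :
    (l.dropWhile p).length ≤ l.length := by
  induction l with
  | nil => simp
  | cons a t ih =>
    rw [List.dropWhile_cons]
    split
    · exact le_trans ih (by simp)
    · simp

/-- West's stack-sorting map `s`: for a nonempty sequence `π = LnR` of distinct
positive integers with largest entry `n`, `s(∅) = ∅` and `s(LnR) = s(L)s(R)n`. -/
def stackSort : List ℕ → List ℕ
  | [] => []
  | a :: t =>
    stackSort ((a :: t).takeWhile (fun x => x ≠ listMax (a :: t))) ++
      stackSort (((a :: t).dropWhile (fun x => x ≠ listMax (a :: t))).tail) ++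
      [listMax (a :: t)]
termination_by l => l.length
decreasing_by
  · exact length_takeWhile_lt (listMax_mem _ (by simp)) (by simp)
  · have h := length_dropWhile_le (fun x => decide (x ≠ listMax (a :: t))) (a :: t)
    have h2 := List.length_tail (l := (a :: t).dropWhile (fun x => decide (x ≠ listMax (a :: t))))
    simp only [List.length_cons] at *
    omega

/-- The number of descents of a sequence `σ₁σ₂⋯σ_n`: the number of indices
`i ∈ {1, …, n-1}` with `σ_i > σ_{i+1}`. -/
def numDescents (l : List ℕ) : ℕ := ((l.zip l.tail).filter (fun p => p.2 < p.1)).length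

/-- The identity permutation `1 2 ⋯ n`, as a list. -/
def idPerm (n : ℕ) : List ℕ := List.range' 1 n

/-- The set of permutations of `{1, …, n}`, written as sequences (lists). -/
def Sn (n : ℕ) : Finset (List ℕ) := (idPerm n).permutations.toFinset

/-- The fertility `F(π)` of `π`: the number of `σ ∈ S_n` with `s(σ) = π`. -/
def fertility (n : ℕ) (π : List ℕ) : ℕ :=
  ((Sn n).filter (fun σ => stackSort σ = π)).card

/-- `F(π, m)`: the number of `σ ∈ S_n` with exactly `m` descents and `s(σ) = π`. -/
def fertilityDes (n : ℕ) (π : List ℕ) (m : ℕ) : ℕ :=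
  ((Sn n).filter (fun σ => stackSort σ = π ∧ numDescents σ = m)).card

/-- `W_t(n)`: the number of `t`-stack sortable permutations in `S_n`, i.e. the
number of `π ∈ S_n` with `s^t(π) = 12⋯n`. -/
def W (t n : ℕ) : ℕ :=
  ((Sn n).filter (fun σ => stackSort^[t] σ = idPerm n)).card

/-- `W_t(n, k)`: the number of `t`-stack sortable permutations in `S_n` with
exactly `k` descents. -/
def Wdes (t n k : ℕ) : ℕ :=
  ((Sn n).filter (fun σ => stackSort^[t] σ = idPerm n ∧ numDescents σ = k)).card

/-- Bóna/Brändén involution: complement descents within each stack-sorting fiber. -/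
def phi : List ℕ → List ℕ
  | [] => []
  | a :: t =>
    if (a :: t).takeWhile (fun x => x ≠ listMax (a :: t)) = [] then
      phi (((a :: t).dropWhile (fun x => x ≠ listMax (a :: t))).tail) ++ [listMax (a :: t)]
    else if ((a :: t).dropWhile (fun x => x ≠ listMax (a :: t))).tail = [] then
      listMax (a :: t) :: phi ((a :: t).takeWhile (fun x => x ≠ listMax (a :: t)))
    else
      phi ((a :: t).takeWhile (fun x => x ≠ listMax (a :: t))) ++
        listMax (a :: t) :: phi (((a :: t).dropWhile (fun x => x ≠ listMax (a :: t))).tail)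
termination_by l => l.length
decreasing_by
  all_goals first
  | exact length_takeWhile_lt (listMax_mem _ (by simp)) (by simp)
  | · have h := length_dropWhile_le (fun x => decide (x ≠ listMax (a :: t))) (a :: t)
      have h2 := List.length_tail (l := (a :: t).dropWhile (fun x => decide (x ≠ listMax (a :: t))))
      simp only [List.length_cons] at *
      omega

theorem le_listMax {l : List ℕ} {x : ℕ} (h : x ∈ l) : x ≤ listMax l := by
  induction l with
  | nil => cases h
  | cons a t ih =>
    rcases List.mem_cons.mp h with rfl | h
    · exact le_max_left _ _
    · exact le_trans (ih h) (le_max_right _ _)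

theorem listMax_le {l : List ℕ} {M : ℕ} (hle : ∀ x ∈ l, x ≤ M) : listMax l ≤ M := by
  induction l with
  | nil => simp [listMax]
  | cons a t ih =>
    simp only [listMax, max_le_iff]
    exact ⟨hle a (List.mem_cons_self), ih fun x hx => hle x (List.mem_cons_of_mem _ hx)⟩

theorem listMax_eq {l : List ℕ} {M : ℕ} (hmem : M ∈ l) (hle : ∀ x ∈ l, x ≤ M) :
    listMax l = M :=
  le_antisymm (listMax_le hle) (le_listMax hmem)

theorem dropWhile_ne_of_mem {l : List ℕ} {M : ℕ} (h : M ∈ l) :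
    l.dropWhile (fun x => x ≠ M) = M :: (l.dropWhile (fun x => x ≠ M)).tail := by
  induction l with
  | nil => cases h
  | cons a t ih =>
    by_cases ha : a = M
    · subst ha
      rw [List.dropWhile_cons_of_neg (by simp)]
      simp
    · rw [List.dropWhile_cons_of_pos (by simpa using ha)]
      exact ih (by rcases List.mem_cons.mp h with rfl | h; exact absurd rfl ha; exact h)

theorem takeWhile_ne_append {L R : List ℕ} {M : ℕ} (hL : M ∉ L) :
    (L ++ M :: R).takeWhile (fun x => x ≠ M) = L := by
  induction L with
  | nil => simp [List.takeWhile_cons_of_neg]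
  | cons a t ih =>
    have ha : a ≠ M := fun h => hL (h ▸ List.mem_cons_self)
    rw [List.cons_append, List.takeWhile_cons_of_pos (by simpa using ha),
      ih (fun h => hL (List.mem_cons_of_mem _ h))]

theorem dropWhile_ne_append {L R : List ℕ} {M : ℕ} (hL : M ∉ L) :
    (L ++ M :: R).dropWhile (fun x => x ≠ M) = M :: R := by
  induction L with
  | nil => simp [List.dropWhile_cons_of_neg]
  | cons a t ih =>
    have ha : a ≠ M := fun h => hL (h ▸ List.mem_cons_self)
    rw [List.cons_append, List.dropWhile_cons_of_pos (by simpa using ha),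
      ih (fun h => hL (List.mem_cons_of_mem _ h))]

theorem stackSort_eq_of_ne_nil {l : List ℕ} (h : l ≠ []) :
    stackSort l = stackSort (l.takeWhile (fun x => x ≠ listMax l)) ++
      stackSort ((l.dropWhile (fun x => x ≠ listMax l)).tail) ++ [listMax l] := by
  cases l with
  | nil => exact absurd rfl h
  | cons a t => rw [stackSort]

theorem phi_eq_of_ne_nil {l : List ℕ} (h : l ≠ []) :
    phi l = if l.takeWhile (fun x => x ≠ listMax l) = [] then
      phi ((l.dropWhile (fun x => x ≠ listMax l)).tail) ++ [listMax l]
    else if (l.dropWhile (fun x => x ≠ listMax l)).tail = [] then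
      listMax l :: phi (l.takeWhile (fun x => x ≠ listMax l))
    else
      phi (l.takeWhile (fun x => x ≠ listMax l)) ++
        listMax l :: phi ((l.dropWhile (fun x => x ≠ listMax l)).tail) := by
  cases l with
  | nil => exact absurd rfl h
  | cons a t => rw [phi]

theorem listMax_append_cons {L R : List ℕ} {M : ℕ} (h1 : ∀ x ∈ L, x < M)
    (h2 : ∀ x ∈ R, x < M) : listMax (L ++ M :: R) = M := by
  apply listMax_eq
  · simp
  · intro x hx
    rcases List.mem_append.mp hx with h | h
    · exact le_of_lt (h1 x h)
    · rcases List.mem_cons.mp h with rfl | h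
      · exact le_rfl
      · exact le_of_lt (h2 x h)

theorem stackSort_split {L R : List ℕ} {M : ℕ} (h1 : ∀ x ∈ L, x < M)
    (h2 : ∀ x ∈ R, x < M) :
    stackSort (L ++ M :: R) = stackSort L ++ stackSort R ++ [M] := by
  have hM : listMax (L ++ M :: R) = M := listMax_append_cons h1 h2
  have hL : M ∉ L := fun h => lt_irrefl M (h1 M h)
  rw [stackSort_eq_of_ne_nil (by simp), hM, takeWhile_ne_append hL,
    dropWhile_ne_append hL, List.tail_cons]

theorem phi_split {L R : List ℕ} {M : ℕ} (h1 : ∀ x ∈ L, x < M)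
    (h2 : ∀ x ∈ R, x < M) :
    phi (L ++ M :: R) = if L = [] then phi R ++ [M]
      else if R = [] then M :: phi L
      else phi L ++ M :: phi R := by
  have hM : listMax (L ++ M :: R) = M := listMax_append_cons h1 h2
  have hL : M ∉ L := fun h => lt_irrefl M (h1 M h)
  rw [phi_eq_of_ne_nil (by simp), hM, takeWhile_ne_append hL,
    dropWhile_ne_append hL, List.tail_cons]

/-- Canonical decomposition of a nonempty list at its maximum. -/
theorem exists_split (l : List ℕ) (h : l ≠ []) :
    l = l.takeWhile (fun x => x ≠ listMax l) ++
      listMax l :: (l.dropWhile (fun x => x ≠ listMax l)).tail := by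
  conv_lhs => rw [← List.takeWhile_append_dropWhile (p := fun x => x ≠ listMax l) (l := l)]
  rw [← dropWhile_ne_of_mem (listMax_mem l h)]

theorem phi_perm_aux : ∀ (n : ℕ) (l : List ℕ), l.length ≤ n → (phi l).Perm l := by
  intro n
  induction n with
  | zero =>
    intro l h
    have : l = [] := List.length_eq_zero_iff.mp (Nat.le_zero.mp h)
    subst this; rw [phi]
  | succ n ih =>
    intro l hl
    rcases eq_or_ne l [] with rfl | hne
    · rw [phi]
    · set M := listMax l with hM
      set L := l.takeWhile (fun x => x ≠ M) with hLdef
      set R := (l.dropWhile (fun x => x ≠ M)).tail with hRdef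
      have hsplit : l = L ++ M :: R := exists_split l hne
      have hlen : L.length + R.length + 1 = l.length := by
        rw [hsplit]; simp; omega
      have hLlen : L.length ≤ n := by omega
      have hRlen : R.length ≤ n := by omega
      rw [phi_eq_of_ne_nil hne, ← hM, ← hLdef, ← hRdef]
      split_ifs with h1 h2
      · have e : l = M :: R := by rw [hsplit, h1]; rfl
        rw [e]
        exact (List.perm_append_singleton _ _).trans ((ih R hRlen).cons M)
      · have e : l = L ++ [M] := by rw [hsplit, h2]
        rw [e]
        exact ((ih L hLlen).cons M).trans (List.perm_append_singleton _ _).symm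
      · rw [hsplit]
        exact (ih L hLlen).append ((ih R hRlen).cons M)

theorem phi_perm (l : List ℕ) : (phi l).Perm l := phi_perm_aux l.length l le_rfl

theorem numDescents_nil : numDescents [] = 0 := rfl

theorem numDescents_singleton (a : ℕ) : numDescents [a] = 0 := rfl

theorem numDescents_cons_cons (a b : ℕ) (t : List ℕ) :
    numDescents (a :: b :: t) = (if b < a then 1 else 0) + numDescents (b :: t) := by
  by_cases h : b < a
  · simp [numDescents, List.filter_cons, h, Nat.add_comm]
  · simp [numDescents, List.filter_cons, h]

theorem numDescents_append_cons {L R : List ℕ} {M : ℕ} (h1 : ∀ x ∈ L, x < M)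
    (h2 : ∀ x ∈ R, x < M) :
    numDescents (L ++ M :: R) = numDescents L + numDescents R +
      (if R = [] then 0 else 1) := by
  induction L with
  | nil =>
    simp only [List.nil_append, numDescents_nil, Nat.zero_add]
    cases R with
    | nil => simp [numDescents_singleton, numDescents_nil]
    | cons b R' =>
      rw [numDescents_cons_cons]
      have : b < M := h2 b (List.mem_cons_self)
      simp [this, numDescents_nil]
      omega
  | cons a L' ih =>
    have ha : a < M := h1 a (List.mem_cons_self)
    have h1' : ∀ x ∈ L', x < M := fun x hx => h1 x (List.mem_cons_of_mem _ hx)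
    cases L' with
    | nil =>
      simp only [List.cons_append, List.nil_append]
      rw [numDescents_cons_cons, numDescents_singleton]
      have : ¬ M < a := not_lt_of_gt ha
      simp only [this, if_false, Nat.zero_add]
      cases R with
      | nil => simp [numDescents_singleton, numDescents_nil]
      | cons b R' =>
        rw [numDescents_cons_cons]
        have hb : b < M := h2 b (List.mem_cons_self)
        simp [hb, numDescents_nil]
        omega
    | cons a' L'' =>
      have e : (a :: a' :: L'') ++ M :: R = a :: a' :: (L'' ++ M :: R) := rfl
      rw [e, numDescents_cons_cons]
      have e2 : a' :: (L'' ++ M :: R) = (a' :: L'') ++ M :: R := rfl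
      rw [e2, ih h1', numDescents_cons_cons]
      omega

theorem phi_nil : phi [] = [] := by rw [phi]

theorem perm_ne_nil {l l' : List ℕ} (h : l.Perm l') (hne : l ≠ []) : l' ≠ [] := by
  intro h'
  subst h'
  exact hne (List.eq_nil_of_length_eq_zero (h.length_eq.trans rfl))

theorem split_facts {l : List ℕ} (hnd : l.Nodup) (hne : l ≠ []) :
    (∀ x ∈ l.takeWhile (fun x => x ≠ listMax l), x < listMax l) ∧
    (∀ x ∈ (l.dropWhile (fun x => x ≠ listMax l)).tail, x < listMax l) ∧
    (l.takeWhile (fun x => x ≠ listMax l)).Nodup ∧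
    ((l.dropWhile (fun x => x ≠ listMax l)).tail).Nodup := by
  set M := listMax l with hM
  set L := l.takeWhile (fun x => x ≠ M) with hLdef
  set R := (l.dropWhile (fun x => x ≠ M)).tail with hRdef
  have hsplit : l = L ++ M :: R := exists_split l hne
  rw [hsplit] at hnd
  rw [List.nodup_append] at hnd
  obtain ⟨hndL, hndMR, hdisj⟩ := hnd
  rw [List.nodup_cons] at hndMR
  have hMR : M ∉ R := hndMR.1
  have hML : M ∉ L := fun h => hdisj _ h _ List.mem_cons_self rfl
  refine ⟨?_, ?_, hndL, hndMR.2⟩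
  · intro x hx
    have hxl : x ∈ l := by rw [hsplit]; exact List.mem_append_left _ hx
    have : x ≠ M := fun h => hML (h ▸ hx)
    exact lt_of_le_of_ne (le_listMax hxl) this
  · intro x hx
    have hxl : x ∈ l := by
      rw [hsplit]; exact List.mem_append_right _ (List.mem_cons_of_mem _ hx)
    have : x ≠ M := fun h => hMR (h ▸ hx)
    exact lt_of_le_of_ne (le_listMax hxl) this

theorem phi_des_aux : ∀ (n : ℕ) (l : List ℕ), l.length ≤ n → l.Nodup → l ≠ [] →
    numDescents (phi l) + numDescents l + 1 = l.length := by
  intro n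
  induction n with
  | zero =>
    intro l h _ hne
    exact absurd (List.length_eq_zero_iff.mp (Nat.le_zero.mp h)) hne
  | succ n ih =>
    intro l hl hnd hne
    set M := listMax l with hM
    set L := l.takeWhile (fun x => x ≠ M) with hLdef
    set R := (l.dropWhile (fun x => x ≠ M)).tail with hRdef
    have hsplit : l = L ++ M :: R := exists_split l hne
    obtain ⟨h1, h2, hndL, hndR⟩ := split_facts hnd hne
    have hlen : L.length + R.length + 1 = l.length := by
      rw [hsplit]; simp; omega
    have hdl : numDescents l = numDescents L + numDescents R +
        (if R = [] then 0 else 1) := by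
      conv_lhs => rw [hsplit]
      exact numDescents_append_cons h1 h2
    have hphiL : ∀ x ∈ phi L, x < M := fun x hx => h1 x ((phi_perm L).subset hx)
    have hphiR : ∀ x ∈ phi R, x < M := fun x hx => h2 x ((phi_perm R).subset hx)
    rw [phi_eq_of_ne_nil hne, ← hM, ← hLdef, ← hRdef]
    split_ifs with hL0 hR0
    · -- L = []
      have hdphi : numDescents (phi R ++ [M]) = numDescents (phi R) := by
        rw [numDescents_append_cons hphiR (by simp)]
        simp [numDescents_nil]
      rw [hdphi]
      rcases eq_or_ne R [] with hR | hR
      · rw [hL0, hR] at hdl hlen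
        rw [hR, phi_nil]
        simp only [numDescents_nil, List.length_nil, if_true, reduceIte] at hdl hlen ⊢
        omega
      · have hIH := ih R (by omega) hndR hR
        rw [hL0] at hdl
        simp [numDescents_nil, hR] at hdl
        rw [hL0] at hlen
        simp at hlen
        omega
    · -- R = [], L ≠ []
      have hphiLne : phi L ≠ [] := perm_ne_nil (phi_perm L).symm hL0
      have hdphi : numDescents (M :: phi L) = numDescents (phi L) + 1 := by
        have := numDescents_append_cons (L := []) (R := phi L) (M := M)
          (by simp) hphiL
        simp only [List.nil_append, numDescents_nil, Nat.zero_add] at this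
        rw [this, if_neg hphiLne]
      have hIH := ih L (by omega) hndL hL0
      rw [hdphi]
      rw [hR0] at hdl
      simp [numDescents_nil] at hdl
      rw [hR0] at hlen
      simp at hlen
      omega
    · -- both nonempty
      have hphiRne : phi R ≠ [] := perm_ne_nil (phi_perm R).symm hR0
      have hdphi : numDescents (phi L ++ M :: phi R) =
          numDescents (phi L) + numDescents (phi R) + 1 := by
        rw [numDescents_append_cons hphiL hphiR, if_neg hphiRne]
      have hIHL := ih L (by omega) hndL hL0
      have hIHR := ih R (by omega) hndR hR0
      rw [hdphi]
      rw [if_neg hR0] at hdl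
      omega

theorem phi_des {l : List ℕ} (hnd : l.Nodup) (hne : l ≠ []) :
    numDescents (phi l) + numDescents l + 1 = l.length :=
  phi_des_aux l.length l le_rfl hnd hne

theorem stackSort_nil : stackSort [] = [] := by rw [stackSort]

theorem phi_stackSort_aux : ∀ (n : ℕ) (l : List ℕ), l.length ≤ n → l.Nodup →
    stackSort (phi l) = stackSort l := by
  intro n
  induction n with
  | zero =>
    intro l h _
    have : l = [] := List.length_eq_zero_iff.mp (Nat.le_zero.mp h)
    subst this; rw [phi_nil]
  | succ n ih =>
    intro l hl hnd
    rcases eq_or_ne l [] with rfl | hne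
    · rw [phi_nil]
    · set M := listMax l with hM
      set L := l.takeWhile (fun x => x ≠ M) with hLdef
      set R := (l.dropWhile (fun x => x ≠ M)).tail with hRdef
      have hsplit : l = L ++ M :: R := exists_split l hne
      obtain ⟨h1, h2, hndL, hndR⟩ := split_facts hnd hne
      have hlen : L.length + R.length + 1 = l.length := by
        rw [hsplit]; simp; omega
      have hsort : stackSort l = stackSort L ++ stackSort R ++ [M] := by
        conv_lhs => rw [hsplit]
        exact stackSort_split h1 h2
      have hphiL : ∀ x ∈ phi L, x < M := fun x hx => h1 x ((phi_perm L).subset hx)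
      have hphiR : ∀ x ∈ phi R, x < M := fun x hx => h2 x ((phi_perm R).subset hx)
      rw [phi_eq_of_ne_nil hne, ← hM, ← hLdef, ← hRdef]
      split_ifs with hL0 hR0
      · rw [stackSort_split hphiR (by simp), ih R (by omega) hndR, hsort, hL0,
          stackSort_nil]
        simp
      · rw [show (M :: phi L) = [] ++ M :: phi L from rfl,
          stackSort_split (by simp) hphiL, ih L (by omega) hndL, hsort, hR0,
          stackSort_nil]
        simp
      · rw [stackSort_split hphiL hphiR, ih L (by omega) hndL,
          ih R (by omega) hndR, hsort]

theorem phi_phi_aux : ∀ (n : ℕ) (l : List ℕ), l.length ≤ n → l.Nodup →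
    phi (phi l) = l := by
  intro n
  induction n with
  | zero =>
    intro l h _
    have : l = [] := List.length_eq_zero_iff.mp (Nat.le_zero.mp h)
    subst this; rw [phi_nil, phi_nil]
  | succ n ih =>
    intro l hl hnd
    rcases eq_or_ne l [] with rfl | hne
    · rw [phi_nil, phi_nil]
    · set M := listMax l with hM
      set L := l.takeWhile (fun x => x ≠ M) with hLdef
      set R := (l.dropWhile (fun x => x ≠ M)).tail with hRdef
      have hsplit : l = L ++ M :: R := exists_split l hne
      obtain ⟨h1, h2, hndL, hndR⟩ := split_facts hnd hne
      have hlen : L.length + R.length + 1 = l.length := by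
        rw [hsplit]; simp; omega
      have hphiL : ∀ x ∈ phi L, x < M := fun x hx => h1 x ((phi_perm L).subset hx)
      have hphiR : ∀ x ∈ phi R, x < M := fun x hx => h2 x ((phi_perm R).subset hx)
      rw [phi_eq_of_ne_nil hne, ← hM, ← hLdef, ← hRdef]
      split_ifs with hL0 hR0
      · rw [phi_split hphiR (by simp)]
        rcases eq_or_ne (phi R) [] with h | h
        · have hR : R = [] := ((h ▸ phi_perm R).symm).eq_nil
          rw [if_pos h, phi_nil, hsplit, hL0, hR]
        · rw [if_neg h, if_pos rfl, ih R (by omega) hndR]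
          rw [hsplit, hL0]
          rfl
      · have hphiLne : phi L ≠ [] := perm_ne_nil (phi_perm L).symm hL0
        rw [show (M :: phi L) = [] ++ M :: phi L from rfl,
          phi_split (by simp) hphiL, if_pos rfl, ih L (by omega) hndL]
        rw [hsplit, hR0]
      · have hphiLne : phi L ≠ [] := perm_ne_nil (phi_perm L).symm hL0
        have hphiRne : phi R ≠ [] := perm_ne_nil (phi_perm R).symm hR0
        rw [phi_split hphiL hphiR, if_neg hphiLne, if_neg hphiRne,
          ih L (by omega) hndL, ih R (by omega) hndR]
        exact hsplit.symm

theorem phi_phi {l : List ℕ} (hnd : l.Nodup) : phi (phi l) = l :=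
  phi_phi_aux l.length l le_rfl hnd

theorem phi_stackSort {l : List ℕ} (hnd : l.Nodup) : stackSort (phi l) = stackSort l :=
  phi_stackSort_aux l.length l le_rfl hnd


theorem mem_Sn {n : ℕ} {σ : List ℕ} : σ ∈ Sn n ↔ σ.Perm (idPerm n) := by
  simp [Sn, List.mem_permutations]

/-- For every permutation `π ∈ S_n` and every integer `0 ≤ m ≤ n−1`,
`F(π, m) = F(π, n−m−1)`. -/
theorem fertilityDes_symm (n : ℕ) (hn : 1 ≤ n) (π : List ℕ) (hπ : π ∈ Sn n)
    (m : ℕ) (hm : m ≤ n - 1) :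
    fertilityDes n π m = fertilityDes n π (n - m - 1) := by
  have hndid : (idPerm n).Nodup := by
    simp [idPerm, List.nodup_range']
  have hlenid : (idPerm n).length = n := by simp [idPerm]
  have key : ∀ (σ : List ℕ), σ ∈ Sn n →
      phi σ ∈ Sn n ∧ stackSort (phi σ) = stackSort σ ∧
      numDescents (phi σ) + numDescents σ + 1 = n ∧ phi (phi σ) = σ := by
    intro σ hσ
    have hperm : σ.Perm (idPerm n) := mem_Sn.mp hσ
    have hnd : σ.Nodup := hperm.nodup_iff.mpr hndid
    have hlen : σ.length = n := hperm.length_eq.trans hlenid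
    have hne : σ ≠ [] := by
      intro h; rw [h] at hlen; simp at hlen; omega
    exact ⟨mem_Sn.mpr ((phi_perm σ).trans hperm), phi_stackSort hnd,
      hlen ▸ phi_des hnd hne, phi_phi hnd⟩
  unfold fertilityDes
  apply Finset.card_bij' (fun σ _ => phi σ) (fun σ _ => phi σ)
  · intro σ hσ
    rw [Finset.mem_filter] at hσ ⊢
    obtain ⟨hσS, hsort, hdes⟩ := hσ
    obtain ⟨hS, hss, hd, _⟩ := key σ hσS
    exact ⟨hS, hss.trans hsort, by omega⟩
  · intro σ hσ
    rw [Finset.mem_filter] at hσ ⊢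
    obtain ⟨hσS, hsort, hdes⟩ := hσ
    obtain ⟨hS, hss, hd, _⟩ := key σ hσS
    exact ⟨hS, hss.trans hsort, by omega⟩
  · intro σ hσ
    rw [Finset.mem_filter] at hσ
    exact (key σ hσ.1).2.2.2
  · intro σ hσ
    rw [Finset.mem_filter] at hσ
    exact (key σ hσ.1).2.2.2
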